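/- Let H be a finite simple graph on [q] without isolated vertices and let I_y = I_c(H) ⊂ K[y_1,...,y_q] be its complementary edge ideal. Then for all k ≥ ℓ ≥ 1, ∂(y^ℓ I_y^{k−ℓ}) ⊆ y^{ℓ−1} I_y^{k+1−ℓ}, where y = y_1⋯y_q and ∂J denotes the ideal generated by all u/y_i with u a minimal generator of J and y_i dividing u. -/
import Mathlib


open MvPolynomial

/-- The complementary edge ideal `I_c(H) = ((y_1⋯y_q)/(y_i y_j) : {i,j} ∈ E(H))`. -/
noncomputable def compEdgeIdeal (K : Type*) [Field K] (V : Type*) [Fintype V] [DecidableEq V]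
    (G : SimpleGraph V) : Ideal (MvPolynomial V K) :=
  Ideal.span {m | ∃ i j, G.Adj i j ∧ m = ∏ t ∈ Finset.univ \ {i, j}, X t}

/-- `d` is the exponent vector of a minimal monomial generator of the monomial ideal `J`. -/
def IsMinGen {K : Type*} [Field K] {σ : Type*} (J : Ideal (MvPolynomial σ K))
    (d : σ →₀ ℕ) : Prop :=
  monomial d (1 : K) ∈ J ∧
    monomial d (1 : K) ∉ Ideal.span (Set.range (X : σ → MvPolynomial σ K)) * J

/-- For `H` without isolated vertices: `∂(y^ℓ I_y^{k−ℓ}) ⊆ y^{ℓ−1} I_y^{k+1−ℓ}`,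
stated generator-wise: dividing a minimal generator by a variable lands in the target. -/
theorem stmt8 {K : Type*} [Field K] {q : ℕ} (H : SimpleGraph (Fin q))
    (hiso : ∀ i : Fin q, ∃ j, H.Adj i j)
    (Iy : Ideal (MvPolynomial (Fin q) K)) (hIy : Iy = compEdgeIdeal K (Fin q) H)
    (k ℓ : ℕ) (h1 : 1 ≤ ℓ) (h2 : ℓ ≤ k)
    (d : Fin q →₀ ℕ) (i : Fin q) (hdi : 1 ≤ d i)
    (hmin : IsMinGen (Ideal.span {(∏ j : Fin q, (X j : MvPolynomial (Fin q) K)) ^ ℓ} *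
      Iy ^ (k - ℓ)) d) :
    monomial (d - Finsupp.single i 1) (1 : K) ∈
      Ideal.span {(∏ j : Fin q, (X j : MvPolynomial (Fin q) K)) ^ (ℓ - 1)} *
        Iy ^ (k + 1 - ℓ) := by
  obtain ⟨j, hij⟩ := hiso i
  have hne : i ≠ j := hij.ne
  set y : MvPolynomial (Fin q) K := ∏ t : Fin q, X t with hy
  set g : MvPolynomial (Fin q) K := ∏ t ∈ Finset.univ \ {i, j}, X t with hg
  have hgen : g ∈ Iy := by
    rw [hIy]; exact Ideal.subset_span ⟨i, j, hij, rfl⟩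
  have hyfac : y = X i * X j * g := by
    rw [hy, hg, ← Finset.prod_sdiff (Finset.subset_univ ({i, j} : Finset (Fin q))),
      Finset.prod_pair hne]
    ring
  have hincl : Ideal.span {y ^ ℓ} * Iy ^ (k - ℓ) ≤
      Ideal.span {X i} * (Ideal.span {y ^ (ℓ - 1)} * Iy ^ (k + 1 - ℓ)) := by
    rw [Ideal.mul_le]
    intro r hr s hs
    rw [Ideal.mem_span_singleton] at hr
    obtain ⟨c, rfl⟩ := hr
    have hmem : X j * ((s * c) * g) ∈ Iy ^ (k + 1 - ℓ) := by
      have h3 : k + 1 - ℓ = (k - ℓ) + 1 := by omega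
      rw [h3, pow_succ]
      exact Ideal.mul_mem_left _ _
        (Ideal.mul_mem_mul (Ideal.mul_mem_right c _ hs) hgen)
    have heq : (y ^ ℓ * c) * s = X i * (y ^ (ℓ - 1) * (X j * ((s * c) * g))) := by
      conv_lhs => rw [show ℓ = (ℓ - 1) + 1 from (Nat.succ_pred_eq_of_pos h1).symm]
      rw [pow_succ, hyfac]; ring
    rw [heq]
    exact Ideal.mul_mem_mul (Ideal.mem_span_singleton_self _)
      (Ideal.mul_mem_mul (Ideal.mem_span_singleton_self _) hmem)
  have hmem0 := hincl hmin.1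
  rw [Ideal.mem_span_singleton_mul] at hmem0
  obtain ⟨z, hz, hzeq⟩ := hmem0
  have hd : monomial d (1 : K) = X i * monomial (d - Finsupp.single i 1) (1 : K) := by
    rw [X, monomial_mul, one_mul,
      add_tsub_cancel_of_le (Finsupp.single_le_iff.mpr hdi)]
  have hcancel : z = monomial (d - Finsupp.single i 1) (1 : K) :=
    mul_left_cancel₀ (X_ne_zero i) (by rw [hzeq, hd])
  rwa [hcancel] at hz
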